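/- Let x, y, z be positive real numbers with xyz = 1 and let α be a real number with 0 < α < 1. Then (1/(x²-x+1))^α + (1/(y²-y+1))^α + (1/(z²-z+1))^α ≤ 3, where powers are real (rpow) powers. -/

import Mathlib

private lemma denom_pos (t : ℝ) : 0 < t ^ 2 - t + 1 := by nlinarith [sq_nonneg (2 * t - 1)]

private lemma sum_frac_le_three (x y z : ℝ) (hx : 0 < x) (hy : 0 < y) (hz : 0 < z)
    (h : x * y * z = 1) :
    1 / (x ^ 2 - x + 1) + 1 / (y ^ 2 - y + 1) + 1 / (z ^ 2 - z + 1) ≤ 3 := by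
  have hA := denom_pos x
  have hB := denom_pos y
  have hC := denom_pos z
  have hz' : z = 1 / (x * y) := by
    rw [eq_div_iff (mul_pos hx hy).ne']
    linear_combination h
  subst hz'
  rw [div_add_div _ _ hA.ne' hB.ne', div_add_div _ _ (mul_pos hA hB).ne' hC.ne',
    div_le_iff₀ (mul_pos (mul_pos hA hB) hC)]
  have hxy : (0:ℝ) < x * y := mul_pos hx hy
  have e1 : (1 / (x * y)) ^ 2 - 1 / (x * y) + 1 = (1 - x * y + (x*y)^2) / (x*y)^2 := by
    field_simp
  rw [e1, ← mul_le_mul_iff_of_pos_right (pow_pos hxy 2)]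
  have hne : x * y ≠ 0 := hxy.ne'
  field_simp
  nlinarith [sq_nonneg (2*y - x*y^2 - 1), sq_nonneg (2*x - x^2*y - 1),
      sq_nonneg (x*y*(2*x*y - x - y)), sq_nonneg ((x-1)*(y-1)),
      sq_nonneg (y*(x-1)*(x*y-1)), sq_nonneg (x*(y-1)*(x*y-1)),
      mul_nonneg hx.le (sq_nonneg (y*(x-1))), mul_nonneg hy.le (sq_nonneg (x*(y-1))),
      mul_nonneg hxy.le (sq_nonneg (x*y-1))]

theorem lemma_two (x y z α : ℝ) (hx : 0 < x) (hy : 0 < y) (hz : 0 < z)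
    (h : x * y * z = 1) (hα0 : 0 < α) (hα1 : α < 1) :
    (1 / (x ^ 2 - x + 1)) ^ α + (1 / (y ^ 2 - y + 1)) ^ α + (1 / (z ^ 2 - z + 1)) ^ α ≤ 3 := by
  have key := sum_frac_le_three x y z hx hy hz h
  have bern : ∀ t : ℝ, 0 < t → t ^ α ≤ 1 + α * (t - 1) := by
    intro t ht
    have h1 : (-1:ℝ) ≤ t - 1 := by linarith
    have := rpow_one_add_le_one_add_mul_self h1 hα0.le hα1.le
    have e : 1 + (t - 1) = t := by ring
    rw [e] at this
    linarith
  have hA := denom_pos x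
  have hB := denom_pos y
  have hC := denom_pos z
  have b1 := bern _ (one_div_pos.mpr hA)
  have b2 := bern _ (one_div_pos.mpr hB)
  have b3 := bern _ (one_div_pos.mpr hC)
  nlinarith [b1, b2, b3, key, hα0]
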